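/- Let $C_n$ be the cycle graph on vertices $x_1, \ldots, x_n$ with $n \geq 9$ odd, and let $\mathfrak{c} \in \mathbb{Z}_{>0}^n$ be defined by $c_i = 2$ for $i \in \{1,3,7\}$ and $c_i = 1$ otherwise. Then $\delta_{\mathfrak{c}}(I(C_n)) = (n+1)/2$. -/

import Mathlib

open Finset

/-- A monomial with exponent vector `a` belongs to the `q`-th power of the edge ideal of `G`:
it is divisible by a product of `q` edges of `G`. -/
def memPow {n : ℕ} (G : SimpleGraph (Fin n)) (q : ℕ) (a : Fin n → ℕ) : Prop :=
  ∃ e : Fin q → Fin n × Fin n, (∀ i, G.Adj (e i).1 (e i).2) ∧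
    ∀ j, (∑ i, ((if (e i).1 = j then 1 else 0) + (if (e i).2 = j then 1 else 0))) ≤ a j

/-- The exponent vector `a` is componentwise bounded by `c`. -/
def bdd {n : ℕ} (c a : Fin n → ℕ) : Prop := ∀ i, a i ≤ c i

/-- `δ_c(I(G))`: the largest `q` such that `(I(G)^q)_c ≠ 0`, i.e. such that some
`c`-bounded monomial lies in `I(G)^q`. -/
noncomputable def deltaC {n : ℕ} (G : SimpleGraph (Fin n)) (c : Fin n → ℕ) : ℕ :=
  sSup {q | ∃ a, bdd c a ∧ memPow G q a}

/-- `W(c,G)`: the minimal monomial generators of `(I(G)^{δ_c(I(G))})_c`, i.e. the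
`c`-bounded monomials of `I(G)^{δ_c}` that are minimal with respect to divisibility. -/
def genW {n : ℕ} (G : SimpleGraph (Fin n)) (c : Fin n → ℕ) : Set (Fin n → ℕ) :=
  {a | bdd c a ∧ memPow G (deltaC G c) a ∧
    ∀ b, bdd a b → memPow G (deltaC G c) b → b = a}

/-- The monomial `x_ρ · u / x_ξ`. -/
def exch {n : ℕ} (u : Fin n → ℕ) (ξ ρ : Fin n) : Fin n → ℕ :=
  fun i => if i = ρ then u i + 1 else if i = ξ then u i - 1 else u i

/-- `W(c,G)` enjoys the strong exchange property. -/
def SEPc {n : ℕ} (G : SimpleGraph (Fin n)) (c : Fin n → ℕ) : Prop :=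
  ∀ u ∈ genW G c, ∀ v ∈ genW G c, ∀ ξ ρ : Fin n, v ξ < u ξ → u ρ < v ρ →
    exch u ξ ρ ∈ genW G c

/-- The graph `G` enjoys the strong exchange property: `W(c,G)` does, for every
`c ∈ ℤ_{>0}^n`. -/
def SEP {n : ℕ} (G : SimpleGraph (Fin n)) : Prop :=
  ∀ c : Fin n → ℕ, (∀ i, 0 < c i) → SEPc G c

/-- The cycle graph on `Fin m`. -/
def cycleG (m : ℕ) : SimpleGraph (Fin m) :=
  SimpleGraph.fromRel (fun i j => (i.val + 1) % m = j.val)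

/-- The path graph on `Fin m`. -/
def pathG (m : ℕ) : SimpleGraph (Fin m) :=
  SimpleGraph.fromRel (fun i j => i.val + 1 = j.val)

/-- A set of monomials is of Veronese type: it equals `w · V^{(d)}(a)`, the set of
translates by a fixed monomial `w` of all monomials of degree `d` componentwise
bounded by `a`. -/
def IsVeronese {n : ℕ} (S : Set (Fin n → ℕ)) : Prop :=
  ∃ (w : Fin n → ℕ) (d : ℕ) (a : Fin n → ℕ), d ≤ ∑ i, a i ∧
    S = {u | ∃ v : Fin n → ℕ, (∀ i, v i ≤ a i) ∧ (∑ i, v i) = d ∧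
      u = fun i => w i + v i}

/-- The graph on `Fin m` with edges given by a list of (0-based) pairs. -/
def listGraph (m : ℕ) (E : List (ℕ × ℕ)) : SimpleGraph (Fin m) :=
  SimpleGraph.fromRel (fun i j => (i.val, j.val) ∈ E)

/-- For the cycle `C_n` with `n ≥ 9` odd and `c` with `c_i = 2` for
`i ∈ {1,3,7}` (1-based) and `c_i = 1` otherwise, `δ_c(I(C_n)) = (n+1)/2`. -/
theorem stmt2 (n : ℕ) (hn : 9 ≤ n) (ho : Odd n) :
    IsGreatest {q | ∃ a, bdd (fun i : Fin n =>
        if i.val = 0 ∨ i.val = 2 ∨ i.val = 6 then 2 else 1) a ∧ memPow (cycleG n) q a}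
      ((n + 1) / 2) := by
  obtain ⟨m, hm⟩ := ho
  have hm4 : 4 ≤ m := by omega
  haveI : NeZero n := ⟨by omega⟩
  have h1n : ((1 : Fin n) : ℕ) = 1 := by
    rw [Fin.val_one']; exact Nat.mod_eq_of_lt (by omega)
  constructor
  · -- membership
    refine ⟨(fun j => if j.val = 0 then 2 else 1), ?_, ?_⟩
    · intro j; dsimp only; split_ifs <;> omega
    · have hq : (n + 1) / 2 = m + 1 := by omega
      rw [hq]
      set e : Fin (m+1) → Fin n × Fin n := fun i =>
        if h : (i : ℕ) < m then (⟨2 * i, by omega⟩, ⟨2 * i + 1, by omega⟩)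
        else (⟨n - 1, by omega⟩, ⟨0, by omega⟩) with he
      have hE : ∀ i : Fin (m+1),
          ((e i).1.val = 2 * i.val ∧ (e i).2.val = 2 * i.val + 1 ∧ (i : ℕ) < m) ∨
          ((e i).1.val = n - 1 ∧ (e i).2.val = 0 ∧ (i : ℕ) = m) := by
        intro i
        by_cases h : (i : ℕ) < m
        · left
          have hei : e i = (⟨2 * i, by omega⟩, ⟨2 * i + 1, by omega⟩) := by
            simp only [he]; exact dif_pos h
          rw [hei]
          exact ⟨rfl, rfl, h⟩
        · right
          have hei : e i = (⟨n - 1, by omega⟩, ⟨0, by omega⟩) := by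
            simp only [he]; exact dif_neg h
          rw [hei]
          exact ⟨rfl, rfl, by omega⟩
      refine ⟨e, ?_, ?_⟩
      · intro i
        rw [cycleG, SimpleGraph.fromRel_adj]
        rcases hE i with ⟨h1, h2, h3⟩ | ⟨h1, h2, h3⟩
        · refine ⟨fun hc => by rw [hc] at h1; omega, Or.inl ?_⟩
          rw [h1, h2]; exact Nat.mod_eq_of_lt (by omega)
        · refine ⟨fun hc => by rw [hc] at h1; omega, Or.inl ?_⟩
          rw [h1, h2]
          have : n - 1 + 1 = n := by omega
          rw [this, Nat.mod_self]
      · intro j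
        dsimp only
        have hsb : (∑ i, ((if (e i).1 = j then 1 else 0) + (if (e i).2 = j then 1 else 0)))
            = (Finset.univ.filter (fun i => (e i).1 = j)).card
              + (Finset.univ.filter (fun i => (e i).2 = j)).card := by
          rw [Finset.sum_add_distrib]
          rw [Finset.sum_boole, Finset.sum_boole]
          simp
        rw [hsb]
        have hc1 : (Finset.univ.filter (fun i => (e i).1 = j)).card ≤ 1 := by
          rw [Finset.card_le_one]
          intro i hi i' hi'
          simp only [Finset.mem_filter] at hi hi'
          have hv : (e i).1.val = (e i').1.val := by rw [hi.2, hi'.2]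
          apply Fin.ext
          rcases hE i with ⟨a1, a2, a3⟩ | ⟨a1, a2, a3⟩ <;>
            rcases hE i' with ⟨b1, b2, b3⟩ | ⟨b1, b2, b3⟩ <;> omega
        have hc2 : (Finset.univ.filter (fun i => (e i).2 = j)).card ≤ 1 := by
          rw [Finset.card_le_one]
          intro i hi i' hi'
          simp only [Finset.mem_filter] at hi hi'
          have hv : (e i).2.val = (e i').2.val := by rw [hi.2, hi'.2]
          apply Fin.ext
          rcases hE i with ⟨a1, a2, a3⟩ | ⟨a1, a2, a3⟩ <;>
            rcases hE i' with ⟨b1, b2, b3⟩ | ⟨b1, b2, b3⟩ <;> omega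
        by_cases hj0 : j.val = 0
        · rw [if_pos hj0]; omega
        · rw [if_neg hj0]
          rcases Nat.even_or_odd (j.val) with hev | hod
        -- even, nonzero: second filter empty
          · obtain ⟨t, ht⟩ := hev
            have h2e : (Finset.univ.filter (fun i => (e i).2 = j)).card = 0 := by
              rw [Finset.card_eq_zero, Finset.filter_eq_empty_iff]
              intro i _ hcon
              have hv : (e i).2.val = j.val := by rw [hcon]
              rcases hE i with ⟨a1, a2, a3⟩ | ⟨a1, a2, a3⟩ <;> omega
            omega
          · obtain ⟨t, ht⟩ := hod
            have h1e : (Finset.univ.filter (fun i => (e i).1 = j)).card = 0 := by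
              rw [Finset.card_eq_zero, Finset.filter_eq_empty_iff]
              intro i _ hcon
              have hv : (e i).1.val = j.val := by rw [hcon]
              rcases hE i with ⟨a1, a2, a3⟩ | ⟨a1, a2, a3⟩ <;> omega
            omega
  · -- upper bound
    rintro q ⟨a, hb, e, hadj, hsum⟩
    set c : Fin n → ℕ := fun i : Fin n =>
      if i.val = 0 ∨ i.val = 2 ∨ i.val = 6 then 2 else 1 with hcdef
    have hsle : ∀ j, (∑ i, ((if (e i).1 = j then 1 else 0)
        + (if (e i).2 = j then 1 else 0))) ≤ c j := fun j => le_trans (hsum j) (hb j)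
    have htot : (∑ j, ∑ i, ((if (e i).1 = j then 1 else 0)
        + (if (e i).2 = j then 1 else 0))) = 2 * q := by
      rw [Finset.sum_comm]
      have : ∀ i : Fin q, (∑ j, ((if (e i).1 = j then 1 else 0)
          + (if (e i).2 = j then 1 else 0))) = 2 := by
        intro i
        rw [Finset.sum_add_distrib, Finset.sum_ite_eq, Finset.sum_ite_eq]
        simp
      rw [Finset.sum_congr rfl (fun i _ => this i), Finset.sum_const]
      simp [mul_comm]
    have hcsum : (∑ j, c j) = n + 3 := by
      have hstep : ∀ j : Fin n, c j
          = 1 + (if j.val = 0 ∨ j.val = 2 ∨ j.val = 6 then 1 else 0) := by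
        intro j; rw [hcdef]; dsimp only; split_ifs <;> rfl
      rw [Finset.sum_congr rfl (fun j _ => hstep j), Finset.sum_add_distrib,
        Finset.sum_const, Finset.sum_boole]
      have hfil : Finset.univ.filter (fun j : Fin n => j.val = 0 ∨ j.val = 2 ∨ j.val = 6)
          = {(⟨0, by omega⟩ : Fin n), ⟨2, by omega⟩, ⟨6, by omega⟩} := by
        ext j
        simp only [Finset.mem_filter, Finset.mem_univ, true_and, Finset.mem_insert,
          Finset.mem_singleton, Fin.ext_iff, Fin.val_mk]
      rw [hfil]
      rw [Finset.card_insert_of_notMem (by simp [Fin.ext_iff]),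
        Finset.card_insert_of_notMem (by simp [Fin.ext_iff]), Finset.card_singleton]
      simp
    have h2q : 2 * q ≤ n + 3 := by
      rw [← htot, ← hcsum]
      exact Finset.sum_le_sum (fun j _ => hsle j)
    by_contra hgt
    have hq2 : 2 * q = n + 3 := by omega
    have heq : ∀ j, (∑ i, ((if (e i).1 = j then 1 else 0)
        + (if (e i).2 = j then 1 else 0))) = c j := by
      intro j
      by_contra hne
      have hlt : (∑ i, ((if (e i).1 = j then 1 else 0)
          + (if (e i).2 = j then 1 else 0))) < c j := lt_of_le_of_ne (hsle j) hne
      have : (∑ j, ∑ i, ((if (e i).1 = j then 1 else 0)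
          + (if (e i).2 = j then 1 else 0))) < ∑ j, c j :=
        Finset.sum_lt_sum (fun j _ => hsle j) ⟨j, Finset.mem_univ j, hlt⟩
      omega
    have hadj' : ∀ i, (e i).1 ≠ (e i).2 ∧ (((e i).1.val + 1) % n = (e i).2.val
        ∨ ((e i).2.val + 1) % n = (e i).1.val) := by
      intro i
      have := hadj i
      rwa [cycleG, SimpleGraph.fromRel_adj] at this
    set g : Fin q → Fin n := fun i =>
      if ((e i).1.val + 1) % n = (e i).2.val then (e i).1 else (e i).2 with hgdef
    have hpair : ∀ i, (g i = (e i).1 ∧ g i + 1 = (e i).2)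
        ∨ (g i = (e i).2 ∧ g i + 1 = (e i).1) := by
      intro i
      by_cases h : ((e i).1.val + 1) % n = (e i).2.val
      · left
        have hg1 : g i = (e i).1 := by rw [hgdef]; dsimp only; rw [if_pos h]
        refine ⟨hg1, Fin.ext ?_⟩
        rw [Fin.val_add, h1n, hg1, h]
      · right
        have h2 := ((hadj' i).2).resolve_left h
        have hg1 : g i = (e i).2 := by rw [hgdef]; dsimp only; rw [if_neg h]
        refine ⟨hg1, Fin.ext ?_⟩
        rw [Fin.val_add, h1n, hg1, h2]
    set M : Fin n → ℕ := fun k => ∑ i, (if g i = k then 1 else 0) with hMdef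
    have heqn : ∀ p j : Fin n, p + 1 = j → M j + M p = c j := by
      intro p j hpj
      have hsplit : (∑ i, ((if (e i).1 = j then 1 else 0)
          + (if (e i).2 = j then 1 else 0)))
          = (∑ i, (if g i = j then 1 else 0)) + (∑ i, (if g i + 1 = j then 1 else 0)) := by
        rw [← Finset.sum_add_distrib]
        refine Finset.sum_congr rfl (fun i _ => ?_)
        rcases hpair i with ⟨h1, h2⟩ | ⟨h1, h2⟩
        · rw [← h1, ← h2]
        · rw [← h1, ← h2]; exact Nat.add_comm _ _
      have hshift : (∑ i, (if g i + 1 = j then 1 else 0)) = M p := by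
        rw [hMdef]
        refine Finset.sum_congr rfl (fun i _ => ?_)
        have hiff : (g i + 1 = j) ↔ (g i = p) := by
          rw [← hpj]
          exact ⟨fun h => add_right_cancel h, fun h => by rw [h]⟩
        exact if_congr hiff rfl rfl
      have := heq j
      rw [hsplit, hshift] at this
      rw [hMdef]
      exact this
    have hsucc : ∀ (x y : ℕ) (hx : x < n) (hy : y < n), (x + 1) % n = y →
        (⟨x, hx⟩ : Fin n) + 1 = ⟨y, hy⟩ := by
      intro x y hx hy hxy
      apply Fin.ext
      rw [Fin.val_add, h1n]
      exact hxy
    have key : ∀ (x y : ℕ) (hx : x < n) (hy : y < n), (x + 1) % n = y →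
        M ⟨y, hy⟩ + M ⟨x, hx⟩ = (if y = 0 ∨ y = 2 ∨ y = 6 then 2 else 1) := by
      intro x y hx hy hxy
      have h := heqn ⟨x, hx⟩ ⟨y, hy⟩ (hsucc x y hx hy hxy)
      rw [hcdef] at h
      exact h
    have hv0 : (0 : ℕ) < n := by omega
    have hv1 : (1 : ℕ) < n := by omega
    have hv2 : (2 : ℕ) < n := by omega
    have hv3 : (3 : ℕ) < n := by omega
    have hvn1 : n - 1 < n := by omega
    have hvn2 : n - 2 < n := by omega
    have e1 := key (n - 1) 0 hvn1 hv0
      (by have h : n - 1 + 1 = n := by omega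
          rw [h, Nat.mod_self])
    have e2 := key 0 1 hv0 hv1 (Nat.mod_eq_of_lt (by omega))
    have e3 := key 1 2 hv1 hv2 (Nat.mod_eq_of_lt (by omega))
    have e4 := key 2 3 hv2 hv3 (Nat.mod_eq_of_lt (by omega))
    have e5 := key (n - 2) (n - 1) hvn2 hvn1
      (by have h : n - 2 + 1 = n - 1 := by omega
          rw [h]; exact Nat.mod_eq_of_lt (by omega))
    rw [if_pos (by omega : (0:ℕ) = 0 ∨ (0:ℕ) = 2 ∨ (0:ℕ) = 6)] at e1
    rw [if_neg (by omega : ¬((1:ℕ) = 0 ∨ (1:ℕ) = 2 ∨ (1:ℕ) = 6))] at e2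
    rw [if_pos (by omega : (2:ℕ) = 0 ∨ (2:ℕ) = 2 ∨ (2:ℕ) = 6)] at e3
    rw [if_neg (by omega : ¬((3:ℕ) = 0 ∨ (3:ℕ) = 2 ∨ (3:ℕ) = 6))] at e4
    rw [if_neg (by omega : ¬(n - 1 = 0 ∨ n - 1 = 2 ∨ n - 1 = 6))] at e5
    omega
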